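/- For n ≥ 1 and 0 ≤ k ≤ n-2, the number of planted ordered trees with n edges having exactly k exterior edges equals the number of planted ordered trees with n edges having exactly k edges at level h with h ≡ 0 (mod 3). -/

import Mathlib

/-- An ordered (plane) tree: an unlabeled rooted tree where the order of the subtrees
of each vertex is significant. -/
inductive OTree where
  | node : List OTree → OTree

namespace OTree

/-- The number of edges of an ordered tree. -/
def numEdges : OTree → ℕ
  | .node ts => (ts.attach.map (fun c => numEdges c.1 + 1)).sum
  decreasing_by
    simp_wf
    have := List.sizeOf_lt_of_mem c.2
    simp at this ⊢
    omega


/-- The number of leaves of an ordered tree (a tree with no edges has one leaf,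
its root). -/
def numLeaves : OTree → ℕ
  | .node [] => 1
  | .node (t :: ts) => ((t :: ts).attach.map (fun c => numLeaves c.1)).sum
  decreasing_by
    simp_wf
    have := List.sizeOf_lt_of_mem c.2
    simp at this ⊢
    omega


/-- The number of exterior edges: edges `uv` such that the planted subtree consisting
of `uv` and all descendants of `v` has at least two leaves. -/
def extEdges : OTree → ℕ
  | .node ts => (ts.attach.map
      (fun c => (if 2 ≤ numLeaves c.1 then 1 else 0) + extEdges c.1)).sum
  decreasing_by
    simp_wf
    have := List.sizeOf_lt_of_mem c.2
    simp at this ⊢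
    omega


/-- `edgesAtLevelFrom t cur h` is the number of edges of `t` at level `h`, where the
root of `t` is at distance `cur` from the global root (the level of an edge `uv` is
the distance from the root to the child `v`). -/
def edgesAtLevelFrom (t : OTree) (cur h : ℕ) : ℕ :=
  match t with
  | .node ts => (ts.attach.map
      (fun c => (if cur + 1 = h then 1 else 0) + edgesAtLevelFrom c.1 (cur + 1) h)).sum
  termination_by t
  decreasing_by
    simp_wf
    have := List.sizeOf_lt_of_mem c.2
    simp at this ⊢
    omega


/-- The number of edges of `t` at level `h`. -/
def edgesAtLevel (t : OTree) (h : ℕ) : ℕ := edgesAtLevelFrom t 0 h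

/-- `edgesLevelModFrom t cur m c`: the number of edges of `t` at level `h` with
`h ≡ c (mod m)`, the root being at distance `cur` from the global root. -/
def edgesLevelModFrom (t : OTree) (cur m c : ℕ) : ℕ :=
  match t with
  | .node ts => (ts.attach.map
      (fun x => (if (cur + 1) % m = c then 1 else 0) +
        edgesLevelModFrom x.1 (cur + 1) m c)).sum
  termination_by t
  decreasing_by
    simp_wf
    have := List.sizeOf_lt_of_mem x.2
    simp at this ⊢
    omega


/-- The number of edges of `t` at level `h` with `h ≡ c (mod m)`. -/
def edgesLevelMod (t : OTree) (m c : ℕ) : ℕ := edgesLevelModFrom t 0 m c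

/-- The preorder traversal word of an ordered tree: each edge contributes a `true`
(up step) when first passed going down and a `false` (down step) when passed going
up. -/
def toPath : OTree → List Bool
  | .node ts => (ts.attach.map (fun c => true :: (toPath c.1 ++ [false]))).flatten
  decreasing_by
    simp_wf
    have := List.sizeOf_lt_of_mem c.2
    simp at this ⊢
    omega


end OTree

/-- An ordered tree is planted if its root has exactly one child. -/
def OTree.IsPlanted : OTree → Prop
  | .node ts => ts.length = 1


namespace OTree

/-! ### Decidable equality -/

mutual
def beq : OTree → OTree → Bool
  | .node ts, .node us => beqList ts us
def beqList : List OTree → List OTree → Bool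
  | [], [] => true
  | a :: as, b :: bs => beq a b && beqList as bs
  | _, _ => false
end

mutual
theorem beq_iff : ∀ a b : OTree, beq a b = true ↔ a = b
  | .node ts, .node us => by
    rw [beq, beqList_iff ts us]; simp
theorem beqList_iff : ∀ as bs : List OTree, beqList as bs = true ↔ as = bs
  | [], [] => by simp [beqList]
  | [], _ :: _ => by simp [beqList]
  | _ :: _, [] => by simp [beqList]
  | a :: as, b :: bs => by
    rw [beqList, Bool.and_eq_true, beq_iff a b, beqList_iff as bs]; simp
end

instance : DecidableEq OTree := fun a b => decidable_of_iff _ (beq_iff a b)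

/-! ### Unfolding lemmas -/

theorem numEdges_node (ts : List OTree) :
    numEdges (node ts) = (ts.map (fun c => numEdges c + 1)).sum := by
  rw [numEdges]; simp

theorem numLeaves_node_nil : numLeaves (node []) = 1 := by rw [numLeaves]

theorem numLeaves_node_cons (t : OTree) (ts : List OTree) :
    numLeaves (node (t :: ts)) = ((t :: ts).map numLeaves).sum := by
  rw [numLeaves]; simp

theorem extEdges_node (ts : List OTree) :
    extEdges (node ts) =
      (ts.map (fun c => (if 2 ≤ numLeaves c then 1 else 0) + extEdges c)).sum := by
  rw [extEdges]
  exact congrArg List.sum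
    (List.attach_map_val (l := ts) (f := fun c => (if 2 ≤ numLeaves c then 1 else 0) + extEdges c))

theorem edgesLevelModFrom_node (ts : List OTree) (cur m c : ℕ) :
    edgesLevelModFrom (node ts) cur m c =
      (ts.map (fun x => (if (cur + 1) % m = c then 1 else 0) +
        edgesLevelModFrom x (cur + 1) m c)).sum := by
  rw [edgesLevelModFrom]; simp

/-! ### Induction principle -/

theorem ind' {P : OTree → Prop}
    (h : ∀ ts : List OTree, (∀ t ∈ ts, P t) → P (node ts)) : ∀ t, P t
  | .node ts => h ts (fun t ht => ind' h t)
  decreasing_by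
    have := List.sizeOf_lt_of_mem ht
    simp at this ⊢
    omega

/-! ### Basic facts -/

theorem one_le_numLeaves (t : OTree) : 1 ≤ numLeaves t := by
  induction t using ind' with
  | h ts ih =>
    match ts with
    | [] => simp [numLeaves_node_nil]
    | t :: ts =>
      rw [numLeaves_node_cons]
      have := ih t (by simp)
      simp only [List.map_cons, List.sum_cons]
      omega

/-- The path tree with `n` edges. -/
def pathT : ℕ → OTree
  | 0 => node []
  | n + 1 => node [pathT n]

@[simp] theorem numEdges_pathT (n : ℕ) : numEdges (pathT n) = n := by
  induction n with
  | zero => simp [pathT, numEdges_node]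
  | succ n ih => simp [pathT, numEdges_node, ih]

@[simp] theorem numLeaves_pathT (n : ℕ) : numLeaves (pathT n) = 1 := by
  induction n with
  | zero => simp [pathT, numLeaves_node_nil]
  | succ n ih => simp [pathT, numLeaves_node_cons, ih]

@[simp] theorem extEdges_pathT (n : ℕ) : extEdges (pathT n) = 0 := by
  induction n with
  | zero => simp [pathT, extEdges_node]
  | succ n ih => simp [pathT, extEdges_node, ih]

theorem eq_pathT_of_numLeaves_eq_one {t : OTree} (h : numLeaves t = 1) :
    t = pathT (numEdges t) := by
  induction t using ind' with
  | h ts ih =>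
    match ts with
    | [] => simp [pathT, numEdges_node]
    | [c] =>
      rw [numLeaves_node_cons] at h
      simp at h
      have hc := ih c (by simp) h
      rw [numEdges_node]
      simp only [List.map_cons, List.map_nil, List.sum_cons, List.sum_nil]
      rw [Nat.add_zero, pathT, ← hc]
    | c :: d :: ts =>
      exfalso
      rw [numLeaves_node_cons] at h
      have h1 := one_le_numLeaves c
      have h2 := one_le_numLeaves d
      simp only [List.map_cons, List.sum_cons] at h
      omega

end OTree

namespace OTree

/-! ### Enumeration of trees by number of edges -/

/-- Total weight of a forest: each tree contributes its edges plus the edge to its root. -/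
def forestEdges (ts : List OTree) : ℕ := (ts.map (fun c => numEdges c + 1)).sum

theorem numEdges_node_eq (ts : List OTree) : numEdges (node ts) = forestEdges ts :=
  numEdges_node ts

@[simp] theorem forestEdges_nil : forestEdges [] = 0 := rfl

theorem forestEdges_cons (t : OTree) (ts : List OTree) :
    forestEdges (t :: ts) = numEdges t + 1 + forestEdges ts := by
  simp [forestEdges]

/-- The finite set of forests of total weight `n`. -/
def forestF : ℕ → Finset (List OTree)
  | 0 => {[]}
  | n + 1 =>
    (Finset.range (n + 1)).attach.biUnion fun j =>
      (((forestF j.1).image node) ×ˢ forestF (n - j.1)).image fun p => p.1 :: p.2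
  decreasing_by
    all_goals (have := Finset.mem_range.1 j.2; omega)

/-- The finite set of trees with `n` edges. -/
def treeF (n : ℕ) : Finset OTree := (forestF n).image node

theorem mem_forestF : ∀ n (ts : List OTree), ts ∈ forestF n ↔ forestEdges ts = n := by
  intro n
  induction n using Nat.strong_induction_on with
  | _ n ih =>
    match n with
    | 0 =>
      intro ts
      rw [forestF]
      simp only [Finset.mem_singleton]
      constructor
      · rintro rfl; rfl
      · intro h
        match ts with
        | [] => rfl
        | t :: ts => rw [forestEdges_cons] at h; omega
    | n + 1 =>
      intro ts
      rw [forestF]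
      simp only [Finset.mem_biUnion, Finset.mem_attach, Finset.mem_image, Finset.mem_product,
        true_and, Subtype.exists, Finset.mem_range, Prod.exists]
      constructor
      · rintro ⟨j, hj, t, rs, ⟨⟨ws, hws, rfl⟩, hrs⟩, rfl⟩
        rw [ih j (by omega) ws] at hws
        rw [ih (n - j) (by omega) rs] at hrs
        rw [forestEdges_cons, numEdges_node_eq, hws, hrs]
        omega
      · intro h
        match ts with
        | [] => simp at h
        | t :: rs =>
          rw [forestEdges_cons] at h
          match t with
          | node ws =>
            refine ⟨numEdges (node ws), by omega, node ws, rs, ⟨⟨ws, ?_, rfl⟩, ?_⟩, rfl⟩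
            · rw [ih _ (by omega) ws, ← numEdges_node_eq]
            · rw [ih _ (by omega) rs]
              omega

theorem mem_treeF {n : ℕ} {t : OTree} : t ∈ treeF n ↔ numEdges t = n := by
  match t with
  | node ws =>
    rw [treeF]
    simp only [Finset.mem_image]
    constructor
    · rintro ⟨vs, hvs, h⟩
      cases h
      rw [numEdges_node_eq, ← mem_forestF n ws]
      exact hvs
    · intro h
      exact ⟨ws, (mem_forestF n ws).2 (by rw [← numEdges_node_eq]; exact h), rfl⟩

theorem nil_mem_forestF_iff {n : ℕ} : ([] : List OTree) ∈ forestF n ↔ n = 0 := by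
  rw [mem_forestF]; simp [eq_comm]

end OTree

namespace OTree

variable {M : Type*} [CommSemiring M]

theorem sum_forestF_succ (F : List OTree → M) (n : ℕ) :
    ∑ ts ∈ forestF (n + 1), F ts =
      ∑ j ∈ Finset.range (n + 1), ∑ t ∈ treeF j, ∑ rs ∈ forestF (n - j), F (t :: rs) := by
  rw [forestF]
  rw [Finset.sum_biUnion]
  · rw [← Finset.sum_attach (Finset.range (n + 1))
      (fun j => ∑ t ∈ treeF j, ∑ rs ∈ forestF (n - j), F (t :: rs))]
    refine Finset.sum_congr rfl fun j _ => ?_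
    rw [Finset.sum_image]
    · rw [Finset.sum_product]
      rfl
    · rintro ⟨a, b⟩ _ ⟨c, d⟩ _ h
      simpa using h
  · rintro j - j' - hjj'
    simp only [Finset.disjoint_left]
    rintro l hl hl'
    simp only [Finset.mem_image, Finset.mem_product, Prod.exists] at hl hl'
    obtain ⟨t, rs, ⟨ht, -⟩, rfl⟩ := hl
    obtain ⟨t', rs', ⟨ht', -⟩, h⟩ := hl'
    rw [List.cons_eq_cons] at h
    obtain ⟨h1, -⟩ := h
    have ht2 : numEdges t = j.1 := by
      obtain ⟨ws, hws, rfl⟩ := ht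
      rw [numEdges_node_eq]; exact (mem_forestF _ _).1 hws
    have ht2' : numEdges t' = j'.1 := by
      obtain ⟨ws, hws, rfl⟩ := ht'
      rw [numEdges_node_eq]; exact (mem_forestF _ _).1 hws
    exact hjj' (Subtype.ext (by rw [← ht2, ← ht2', h1]))

theorem sum_treeF (g : OTree → M) (n : ℕ) :
    ∑ t ∈ treeF n, g t = ∑ ws ∈ forestF n, g (node ws) := by
  rw [treeF, Finset.sum_image]
  rintro a _ b _ h
  simpa using h

/-- Sum of multiplicative weights over all forests of weight `n`. -/
def forestSum (g : OTree → M) (n : ℕ) : M := ∑ ts ∈ forestF n, (ts.map g).prod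

@[simp] theorem forestSum_zero (g : OTree → M) : forestSum g 0 = 1 := by
  rw [forestSum, forestF]
  simp

theorem forestSum_succ (g : OTree → M) (n : ℕ) :
    forestSum g (n + 1) =
      ∑ j ∈ Finset.range (n + 1), (∑ t ∈ treeF j, g t) * forestSum g (n - j) := by
  rw [forestSum, sum_forestF_succ]
  refine Finset.sum_congr rfl fun j _ => ?_
  rw [forestSum, Finset.sum_mul_sum]
  refine Finset.sum_congr rfl fun t _ => ?_
  refine Finset.sum_congr rfl fun rs _ => ?_
  simp

end OTree

namespace OTree

/-! ### The planted statistics -/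

/-- The exterior-edge statistic of the planted tree obtained by adding a stem below `t`. -/
def pstat (t : OTree) : ℕ := (if 2 ≤ numLeaves t then 1 else 0) + extEdges t

/-- The mod-3 level statistic with the root at depth `r`. -/
def sLM (r : ℕ) (t : OTree) : ℕ := edgesLevelModFrom t r 3 0

@[simp] theorem pstat_pathT (n : ℕ) : pstat (pathT n) = 0 := by
  simp [pstat]

theorem pstat_node_single (t : OTree) :
    pstat (node [t]) = (if 2 ≤ numLeaves t then 1 else 0) + pstat t := by
  rw [pstat, pstat, extEdges_node]
  rw [numLeaves_node_cons]
  simp only [List.map_cons, List.map_nil, List.sum_cons, List.sum_nil, Nat.add_zero]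

theorem pstat_node_cons (t : OTree) (rs : List OTree) (h : rs ≠ []) :
    pstat (node (t :: rs)) = 1 + pstat t + (rs.map pstat).sum := by
  match rs with
  | r :: rs =>
    rw [pstat, extEdges_node, numLeaves_node_cons]
    have h1 := one_le_numLeaves t
    have h2 := one_le_numLeaves r
    have hind : 2 ≤ ((t :: r :: rs).map numLeaves).sum := by
      simp only [List.map_cons, List.sum_cons]; omega
    rw [if_pos hind]
    have : ∀ l : List OTree,
        (l.map (fun c => (if 2 ≤ numLeaves c then 1 else 0) + extEdges c)).sum
          = (l.map pstat).sum := by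
      intro l
      induction l with
      | nil => rfl
      | cons a l ih => simp [pstat, ih]
    rw [this]
    simp [pstat]
    omega

theorem sLM_node (r : ℕ) (ws : List OTree) :
    sLM r (node ws) =
      (ws.map (fun c => (if (r + 1) % 3 = 0 then 1 else 0) + sLM (r + 1) c)).sum := by
  rw [sLM, edgesLevelModFrom_node]; rfl

theorem sLM_leaf (r : ℕ) : sLM r (node []) = 0 := by simp [sLM_node]

theorem edgesLevelModFrom_add_three (t : OTree) :
    ∀ cur, edgesLevelModFrom t (cur + 3) 3 0 = edgesLevelModFrom t cur 3 0 := by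
  induction t using ind' with
  | h ts ih =>
    intro cur
    rw [edgesLevelModFrom_node, edgesLevelModFrom_node]
    refine congrArg List.sum (List.map_congr_left fun c hc => ?_)
    have : (cur + 3 + 1) % 3 = (cur + 1) % 3 := by omega
    rw [this]
    have := ih c hc (cur + 1)
    rw [show cur + 3 + 1 = cur + 1 + 3 by omega, this]

theorem sLM_add_three (r : ℕ) (t : OTree) : sLM (r + 3) t = sLM r t :=
  edgesLevelModFrom_add_three t r

end OTree

namespace OTree

open Polynomial

/-! ### Counting polynomials -/

theorem pow_list_sum {M : Type*} [CommMonoid M] (x : M) {α : Type*} (l : List α)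
    (f : α → ℕ) : x ^ (l.map f).sum = (l.map (fun a => x ^ f a)).prod := by
  induction l with
  | nil => simp
  | cons a l ih => simp [pow_add, ih]

theorem forestF_zero : forestF 0 = {[]} := by rw [forestF]

theorem treeF_zero : treeF 0 = {node []} := by rw [treeF, forestF_zero]; rfl

/-- Generating polynomial of trees with `n` edges by the planted exterior statistic. -/
noncomputable def Gp (n : ℕ) : Polynomial ℤ := ∑ t ∈ treeF n, X ^ pstat t

/-- Generating polynomial of forests with weight `n` by the sum of planted exterior
statistics. -/
noncomputable def Lp (n : ℕ) : Polynomial ℤ := forestSum (fun t => X ^ pstat t) n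

/-- Generating polynomial of trees with `n` edges by the mod-3 level statistic with root
at depth `r`. -/
noncomputable def Hp (r n : ℕ) : Polynomial ℤ := ∑ t ∈ treeF n, X ^ sLM r t

theorem pstat_leaf : pstat (node []) = 0 := by
  rw [pstat, extEdges_node]
  simp [numLeaves_node_nil]

@[simp] theorem Gp_zero : Gp 0 = 1 := by
  rw [Gp, treeF_zero, Finset.sum_singleton, pstat_leaf, pow_zero]

@[simp] theorem Lp_zero : Lp 0 = 1 := forestSum_zero _

@[simp] theorem Hp_zero (r : ℕ) : Hp r 0 = 1 := by
  rw [Hp, treeF_zero, Finset.sum_singleton, sLM_leaf, pow_zero]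

theorem Hp_add_three (r n : ℕ) : Hp (r + 3) n = Hp r n := by
  rw [Hp, Hp]
  exact Finset.sum_congr rfl fun t _ => by rw [sLM_add_three]

theorem Hp_eq_forestSum (r n : ℕ) :
    Hp r n = forestSum (fun c =>
      (X : Polynomial ℤ) ^ ((if (r + 1) % 3 = 0 then 1 else 0) + sLM (r + 1) c)) n := by
  rw [Hp, sum_treeF, forestSum]
  refine Finset.sum_congr rfl fun ws _ => ?_
  rw [sLM_node, pow_list_sum]

theorem Hp_succ (r n : ℕ) :
    Hp r (n + 1) = ∑ j ∈ Finset.range (n + 1),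
      ((X : Polynomial ℤ) ^ (if (r + 1) % 3 = 0 then 1 else 0) * Hp (r + 1) j)
        * Hp r (n - j) := by
  rw [Hp_eq_forestSum, forestSum_succ]
  refine Finset.sum_congr rfl fun j _ => ?_
  rw [← Hp_eq_forestSum]
  congr 1
  rw [Hp, Finset.mul_sum]
  exact Finset.sum_congr rfl fun t _ => by rw [pow_add]

theorem Lp_succ (n : ℕ) :
    Lp (n + 1) = ∑ j ∈ Finset.range (n + 1), Gp j * Lp (n - j) := by
  rw [Lp, forestSum_succ]
  rfl

theorem filter_numLeaves_eq_one (n : ℕ) :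
    (treeF n).filter (fun t => numLeaves t = 1) = {pathT n} := by
  ext t
  simp only [Finset.mem_filter, Finset.mem_singleton, mem_treeF]
  constructor
  · rintro ⟨rfl, h⟩
    exact eq_pathT_of_numLeaves_eq_one h
  · rintro rfl
    simp

theorem sum_single_child (n : ℕ) :
    ∑ t ∈ treeF n, (X : Polynomial ℤ) ^ ((if 2 ≤ numLeaves t then 1 else 0) + pstat t)
      = 1 + X * (Gp n - 1) := by
  classical
  rw [← Finset.sum_filter_add_sum_filter_not (treeF n) (fun t => numLeaves t = 1)]
  have h1 : ∑ t ∈ (treeF n).filter (fun t => numLeaves t = 1),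
      (X : Polynomial ℤ) ^ ((if 2 ≤ numLeaves t then 1 else 0) + pstat t) = 1 := by
    rw [filter_numLeaves_eq_one]
    simp
  have h2 : ∑ t ∈ (treeF n).filter (fun t => ¬ numLeaves t = 1),
      (X : Polynomial ℤ) ^ ((if 2 ≤ numLeaves t then 1 else 0) + pstat t)
      = X * (Gp n - 1) := by
    have hGp : Gp n = 1 + ∑ t ∈ (treeF n).filter (fun t => ¬ numLeaves t = 1),
        (X : Polynomial ℤ) ^ pstat t := by
      rw [Gp, ← Finset.sum_filter_add_sum_filter_not (treeF n) (fun t => numLeaves t = 1)]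
      congr 1
      rw [filter_numLeaves_eq_one]
      simp
    rw [hGp, add_sub_cancel_left, Finset.mul_sum]
    refine Finset.sum_congr rfl fun t ht => ?_
    have h2le : 2 ≤ numLeaves t := by
      have := one_le_numLeaves t
      have := (Finset.mem_filter.1 ht).2
      omega
    rw [if_pos h2le, pow_add, pow_one]
  rw [h1, h2]

theorem Gp_succ (n : ℕ) :
    Gp (n + 1) = 1 + X * (Gp n - 1)
      + ∑ j ∈ Finset.range n, X * Gp j * Lp (n - j) := by
  rw [Gp, sum_treeF, sum_forestF_succ (fun ws => (X : Polynomial ℤ) ^ pstat (node ws)) n]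
  rw [Finset.sum_range_succ, Nat.sub_self, forestF_zero]
  have hsingle : (∑ t ∈ treeF n, ∑ rs ∈ ({[]} : Finset (List OTree)),
      (X : Polynomial ℤ) ^ pstat (node (t :: rs))) = 1 + X * (Gp n - 1) := by
    rw [← sum_single_child n]
    refine Finset.sum_congr rfl fun t _ => ?_
    rw [Finset.sum_singleton, pstat_node_single]
  have hmulti : ∀ j ∈ Finset.range n,
      (∑ t ∈ treeF j, ∑ rs ∈ forestF (n - j),
        (X : Polynomial ℤ) ^ pstat (node (t :: rs))) = X * Gp j * Lp (n - j) := by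
    intro j hj
    have hj' : j < n := Finset.mem_range.1 hj
    have hexp : X * Gp j * Lp (n - j) = ∑ t ∈ treeF j, ∑ rs ∈ forestF (n - j),
        X * X ^ pstat t * (rs.map (fun c => (X : Polynomial ℤ) ^ pstat c)).prod := by
      rw [Gp, Finset.mul_sum, Lp, forestSum, Finset.sum_mul_sum]
    rw [hexp]
    refine Finset.sum_congr rfl fun t _ => Finset.sum_congr rfl fun rs hrs => ?_
    have hne : rs ≠ [] := by
      intro h
      subst h
      have := (mem_forestF _ _).1 hrs
      simp at this
      omega
    rw [pstat_node_cons t rs hne, pow_add, pow_add, pow_one, pow_list_sum]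
  rw [Finset.sum_congr rfl hmulti, hsingle]
  ring

end OTree

namespace OTree

/-! ### Generating power series -/

/-- Base ring of coefficients: polynomials in the statistic-marking variable `u`. -/
abbrev Rz : Type := Polynomial ℤ

noncomputable def GS : PowerSeries Rz := PowerSeries.mk Gp
noncomputable def LS : PowerSeries Rz := PowerSeries.mk Lp
noncomputable def HSer (r : ℕ) : PowerSeries Rz := PowerSeries.mk (Hp r)
noncomputable def PSer : PowerSeries Rz := PowerSeries.mk fun _ => 1
noncomputable def CU : PowerSeries Rz := PowerSeries.C (R := Rz) Polynomial.X

theorem eqP : PSer = 1 + PowerSeries.X * PSer := by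
  refine PowerSeries.ext fun n => ?_
  cases n with
  | zero =>
    simp [PSer, PowerSeries.coeff_zero_eq_constantCoeff, map_add, map_mul]
  | succ n =>
    rw [map_add, PowerSeries.coeff_succ_X_mul]
    simp [PSer, PowerSeries.coeff_mk, PowerSeries.coeff_one]

theorem eqL : LS = 1 + PowerSeries.X * (GS * LS) := by
  refine PowerSeries.ext fun n => ?_
  cases n with
  | zero =>
    simp [LS, PowerSeries.coeff_zero_eq_constantCoeff, map_add, map_mul]
  | succ n =>
    rw [map_add, PowerSeries.coeff_succ_X_mul, PowerSeries.coeff_mul]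
    simp only [LS, GS, PowerSeries.coeff_mk, PowerSeries.coeff_one, Nat.succ_ne_zero,
      if_false, zero_add]
    rw [Finset.Nat.sum_antidiagonal_eq_sum_range_succ_mk, Lp_succ]

theorem eqH (r : ℕ) : HSer r = 1 + PowerSeries.X *
    (PowerSeries.C (R := Rz) ((Polynomial.X : Polynomial ℤ) ^ (if (r + 1) % 3 = 0 then 1 else 0)) *
      (HSer (r + 1) * HSer r)) := by
  refine PowerSeries.ext fun n => ?_
  cases n with
  | zero =>
    simp [HSer, PowerSeries.coeff_zero_eq_constantCoeff, map_add, map_mul]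
  | succ n =>
    rw [map_add, PowerSeries.coeff_succ_X_mul, PowerSeries.coeff_C_mul, PowerSeries.coeff_mul]
    simp only [HSer, PowerSeries.coeff_mk, PowerSeries.coeff_one, Nat.succ_ne_zero,
      if_false, zero_add]
    rw [Finset.Nat.sum_antidiagonal_eq_sum_range_succ_mk, Hp_succ r n, Finset.mul_sum]
    exact Finset.sum_congr rfl fun j _ => by ring

theorem eqG : GS = 1 + PowerSeries.X *
    (PSer + CU * (GS - PSer) + CU * (GS * LS - GS)) := by
  refine PowerSeries.ext fun n => ?_
  cases n with
  | zero =>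
    simp [GS, PSer, CU, LS, PowerSeries.coeff_zero_eq_constantCoeff, map_add, map_mul]
  | succ n =>
    rw [map_add, PowerSeries.coeff_succ_X_mul, map_add, map_add, CU,
      PowerSeries.coeff_C_mul, PowerSeries.coeff_C_mul, map_sub, map_sub,
      PowerSeries.coeff_mul]
    simp only [GS, LS, PSer, PowerSeries.coeff_mk, PowerSeries.coeff_one, Nat.succ_ne_zero,
      if_false, zero_add]
    rw [Finset.Nat.sum_antidiagonal_eq_sum_range_succ_mk, Finset.sum_range_succ]
    dsimp only
    rw [Nat.sub_self, Lp_zero, mul_one, Gp_succ n]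
    have hsum : (∑ j ∈ Finset.range n, Polynomial.X * Gp j * Lp (n - j))
        = Polynomial.X * ∑ i ∈ Finset.range n, Gp i * Lp (n - i) := by
      rw [Finset.mul_sum]
      exact Finset.sum_congr rfl fun j _ => by ring
    rw [hsum]
    ring

end OTree

namespace OTree

theorem HSer_three : HSer 3 = HSer 0 := by
  refine PowerSeries.ext fun n => ?_
  simp only [HSer, PowerSeries.coeff_mk]
  exact Hp_add_three 0 n

theorem eqH1 : HSer 1 = 1 + PowerSeries.X * (HSer 2 * HSer 1) := by
  have h := eqH 1
  norm_num at h
  exact h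

theorem eqH2 : HSer 2 = 1 + PowerSeries.X * (CU * (HSer 0 * HSer 2)) := by
  have h := eqH 2
  rw [HSer_three] at h
  norm_num at h
  exact h

theorem eqH0 : HSer 0 = 1 + PowerSeries.X * (HSer 1 * HSer 0) := by
  have h := eqH 0
  norm_num at h
  exact h

theorem qG : ((PowerSeries.X : PowerSeries Rz) ^ 2 - PowerSeries.X) * GS ^ 2
    + (1 - PowerSeries.X * CU) * (GS - 1) = 0 := by
  linear_combination ((1 - PowerSeries.X) * (1 - PowerSeries.X * GS)) * eqG
    - (PowerSeries.X * (CU - 1) * (1 - PowerSeries.X * GS)) * eqP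
    + (PowerSeries.X * CU * GS * (1 - PowerSeries.X)) * eqL

theorem qH : ((PowerSeries.X : PowerSeries Rz) ^ 2 - PowerSeries.X) * HSer 1 ^ 2
    + (1 - PowerSeries.X * CU) * (HSer 1 - 1) = 0 := by
  linear_combination (1 - PowerSeries.X * HSer 1 - PowerSeries.X * CU) * eqH1
    + (PowerSeries.X * HSer 1 * (1 - PowerSeries.X * HSer 1)) * eqH2
    + (PowerSeries.X ^ 2 * CU * HSer 1 * HSer 2) * eqH0

theorem GS_eq_HSer_one : GS = HSer 1 := by
  have key : (GS - HSer 1) * (((PowerSeries.X : PowerSeries Rz) ^ 2 - PowerSeries.X)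
      * (GS + HSer 1) + (1 - PowerSeries.X * CU)) = 0 := by
    linear_combination qG - qH
  have unit : IsUnit (((PowerSeries.X : PowerSeries Rz) ^ 2 - PowerSeries.X)
      * (GS + HSer 1) + (1 - PowerSeries.X * CU)) := by
    rw [PowerSeries.isUnit_iff_constantCoeff]
    simp [CU]
  have := (IsUnit.mul_left_eq_zero unit).1 key
  exact sub_eq_zero.1 this

theorem Gp_eq_Hp_one (n : ℕ) : Gp n = Hp 1 n := by
  have := congrArg (PowerSeries.coeff (R := Rz) n) GS_eq_HSer_one
  simpa [GS, HSer, PowerSeries.coeff_mk] using this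

end OTree

namespace OTree

theorem Gp_coeff (n k : ℕ) :
    (Gp n).coeff k = (((treeF n).filter (fun t => pstat t = k)).card : ℤ) := by
  rw [Gp, Polynomial.finset_sum_coeff]
  rw [Finset.sum_congr rfl (fun t _ => Polynomial.coeff_X_pow (pstat t) k)]
  simp [Finset.sum_boole, eq_comm]

theorem Hp_coeff (r n k : ℕ) :
    (Hp r n).coeff k = (((treeF n).filter (fun t => sLM r t = k)).card : ℤ) := by
  rw [Hp, Polynomial.finset_sum_coeff]
  rw [Finset.sum_congr rfl (fun t _ => Polynomial.coeff_X_pow (sLM r t) k)]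
  simp [Finset.sum_boole, eq_comm]

theorem count_eq (m k : ℕ) :
    ((treeF m).filter (fun t => pstat t = k)).card
      = ((treeF m).filter (fun t => sLM 1 t = k)).card := by
  have h : (Gp m).coeff k = (Hp 1 m).coeff k := by rw [Gp_eq_Hp_one]
  rw [Gp_coeff, Hp_coeff] at h
  exact_mod_cast h

theorem card_subtype (f : OTree → ℕ) (m k : ℕ) :
    Nat.card {t : OTree // numEdges t = m ∧ f t = k}
      = ((treeF m).filter (fun t => f t = k)).card := by
  rw [← Nat.card_eq_finsetCard]
  refine Nat.card_congr (Equiv.subtypeEquivRight fun t => ?_)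
  simp [Finset.mem_filter, mem_treeF, and_comm]

end OTree

namespace OTree

theorem extEdges_node_single (c : OTree) : extEdges (node [c]) = pstat c := by
  rw [extEdges_node, pstat]
  simp

theorem edgesLevelMod_node_single (c : OTree) :
    edgesLevelMod (node [c]) 3 0 = sLM 1 c := by
  rw [edgesLevelMod, edgesLevelModFrom_node]
  simp [sLM]

theorem card_planted (f : OTree → ℕ) (g : OTree → ℕ)
    (hfg : ∀ c : OTree, f (node [c]) = g c) (n k : ℕ) (hn : 1 ≤ n) :
    Nat.card {t : OTree // t.IsPlanted ∧ t.numEdges = n ∧ f t = k}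
      = Nat.card {t : OTree // numEdges t = n - 1 ∧ g t = k} := by
  have hmem : ∀ c : {t : OTree // numEdges t = n - 1 ∧ g t = k},
      (node [c.1]).IsPlanted ∧ (node [c.1]).numEdges = n ∧ f (node [c.1]) = k := by
    rintro ⟨c, h1, h2⟩
    refine ⟨rfl, ?_, ?_⟩
    · rw [numEdges_node]
      simp only [List.map_cons, List.map_nil, List.sum_cons, List.sum_nil]
      omega
    · rw [hfg]
      exact h2
  refine (Nat.card_congr (Equiv.ofBijective
    (fun c => ⟨node [c.1], hmem c⟩) ⟨?_, ?_⟩)).symm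
  · rintro ⟨a, _⟩ ⟨b, _⟩ h
    simp only [Subtype.mk.injEq, node.injEq, List.cons.injEq, and_true] at h
    exact Subtype.ext h
  · rintro ⟨t, hpl, he, hf⟩
    match t with
    | node ts =>
      have : ts.length = 1 := hpl
      match ts, this with
      | [c], _ =>
        have hc : numEdges c = n - 1 := by
          rw [numEdges_node] at he
          simp at he
          omega
        exact ⟨⟨c, hc, by rw [← hfg c]; exact hf⟩, rfl⟩

end OTree

/-- For `0 ≤ k ≤ n-2`, the number of planted ordered trees with `n` edges having
exactly `k` exterior edges equals the number of planted ordered trees with `n` edges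
having exactly `k` edges at level `h` with `h ≡ 0 (mod 3)`. -/
theorem planted_exterior_edges_equidistributed (n k : ℕ) (hn : 1 ≤ n) (hk : k ≤ n - 2) :
    Nat.card {t : OTree // t.IsPlanted ∧ t.numEdges = n ∧ t.extEdges = k} =
      Nat.card {t : OTree // t.IsPlanted ∧ t.numEdges = n ∧ t.edgesLevelMod 3 0 = k} := by
  rw [OTree.card_planted OTree.extEdges OTree.pstat OTree.extEdges_node_single n k hn]
  rw [OTree.card_planted (OTree.edgesLevelMod · 3 0) (OTree.sLM 1)
    OTree.edgesLevelMod_node_single n k hn]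
  rw [OTree.card_subtype, OTree.card_subtype, OTree.count_eq]
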